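/- Let k ≥ 4 and f̄ = y_1^{k-1} + y_1 y_2 + y_2 y_3^2. The Jacobian algebra C[y_1,y_2,y_3]/((k-1)y_1^{k-2} + y_2, y_1 + y_3^2, 2y_2y_3) has C-dimension 2k - 3, and is isomorphic to the algebra A generated over C by elements a, e with relations e^2 = -a, a^{k-2}·e = 0 (so A has basis 1, a, ..., a^{k-2}, e, ae, ..., a^{k-3}e). -/

import Mathlib

open MvPolynomial

noncomputable section

namespace Stmt18Aux

abbrev Ik (k : ℕ) : Ideal (MvPolynomial (Fin 3) ℂ) :=
  Ideal.span ({C ((k : ℂ) - 1) * X 0 ^ (k - 2) + X 1, X 0 + X 2 ^ 2, 2 * X 1 * X 2} :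
    Set (MvPolynomial (Fin 3) ℂ))

lemma hg1 (k : ℕ) : C ((k : ℂ) - 1) * X 0 ^ (k - 2) + X 1 ∈ Ik k :=
  Ideal.subset_span (by simp)

lemma hg2 (k : ℕ) : (X 0 + X 2 ^ 2 : MvPolynomial (Fin 3) ℂ) ∈ Ik k :=
  Ideal.subset_span (by simp)

lemma hg3 (k : ℕ) : (2 * X 1 * X 2 : MvPolynomial (Fin 3) ℂ) ∈ Ik k :=
  Ideal.subset_span (by simp)

lemma mem_of_C_mul (k : ℕ) {c : ℂ} (hc : c ≠ 0) {p : MvPolynomial (Fin 3) ℂ}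
    (h : C c * p ∈ Ik k) : p ∈ Ik k := by
  have hp : p = C c⁻¹ * (C c * p) := by
    rw [← mul_assoc, ← C_mul, inv_mul_cancel₀ hc, C_1, one_mul]
  rw [hp]; exact Ideal.mul_mem_left _ _ h

lemma kcne (k : ℕ) (hk : 4 ≤ k) : (k : ℂ) - 1 ≠ 0 := by
  rw [sub_ne_zero]
  intro h
  have : k = 1 := by exact_mod_cast h
  omega

lemma hX2X0 (k : ℕ) (hk : 4 ≤ k) :
    (X 2 * X 0 ^ (k - 2) : MvPolynomial (Fin 3) ℂ) ∈ Ik k := by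
  apply mem_of_C_mul k (c := 2 * ((k : ℂ) - 1))
    (mul_ne_zero two_ne_zero (kcne k hk))
  have key : (C (2 * ((k : ℂ) - 1)) : MvPolynomial (Fin 3) ℂ) * (X 2 * X 0 ^ (k - 2)) =
      (2 * X 2) * (C ((k : ℂ) - 1) * X 0 ^ (k - 2) + X 1) - 2 * X 1 * X 2 := by
    rw [C_mul, map_ofNat]; ring
  rw [key]
  exact sub_mem (Ideal.mul_mem_left _ _ (hg1 k)) (hg3 k)

lemma hX2negX0 (k : ℕ) (hk : 4 ≤ k) :
    (X 2 * (-(X 0) : MvPolynomial (Fin 3) ℂ) ^ (k - 2)) ∈ Ik k := by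
  rw [neg_pow, mul_left_comm]
  exact Ideal.mul_mem_left _ _ (hX2X0 k hk)

lemma hXn (k : ℕ) (hk : 4 ≤ k) :
    (X 2 ^ (2 * (k - 2) + 1) : MvPolynomial (Fin 3) ℂ) ∈ Ik k := by
  obtain ⟨s, hs⟩ := sub_dvd_pow_sub_pow ((X 2 : MvPolynomial (Fin 3) ℂ) ^ 2) (-(X 0)) (k - 2)
  have key : (X 2 ^ (2 * (k - 2) + 1) : MvPolynomial (Fin 3) ℂ)
      = X 2 * (((X 2 ^ 2) ^ (k - 2) - (-(X 0)) ^ (k - 2))) + X 2 * (-(X 0)) ^ (k - 2) := by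
    rw [pow_succ, pow_mul]; ring
  rw [key, hs]
  refine add_mem ?_ (hX2negX0 k hk)
  have h2 : (X 2 : MvPolynomial (Fin 3) ℂ) * ((X 2 ^ 2 - -(X 0)) * s)
      = (X 2 * s) * (X 0 + X 2 ^ 2) := by ring
  rw [h2]
  exact Ideal.mul_mem_left _ _ (hg2 k)

lemma hM2 (k : ℕ) :
    (X 1 + C ((k : ℂ) - 1) * (-(X 2 ^ 2) : MvPolynomial (Fin 3) ℂ) ^ (k - 2)) ∈ Ik k := by
  obtain ⟨s, hs⟩ := sub_dvd_pow_sub_pow (-((X 2 : MvPolynomial (Fin 3) ℂ) ^ 2)) (X 0) (k - 2)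
  have key : (X 1 + C ((k : ℂ) - 1) * (-(X 2 ^ 2) : MvPolynomial (Fin 3) ℂ) ^ (k - 2))
      = (C ((k : ℂ) - 1) * X 0 ^ (k - 2) + X 1)
        + C ((k : ℂ) - 1) * ((-(X 2 ^ 2)) ^ (k - 2) - X 0 ^ (k - 2)) := by ring
  rw [key, hs]
  refine add_mem (hg1 k) ?_
  have h2 : (C ((k : ℂ) - 1) : MvPolynomial (Fin 3) ℂ) * ((-(X 2 ^ 2) - X 0) * s)
      = (-(C ((k : ℂ) - 1)) * s) * (X 0 + X 2 ^ 2) := by ring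
  rw [h2]
  exact Ideal.mul_mem_left _ _ (hg2 k)

/-! ### The model algebra `ℂ[r]/(r^(2(k-2)+1))` -/

abbrev Bk (k : ℕ) := AdjoinRoot ((Polynomial.X : Polynomial ℂ) ^ (2 * (k - 2) + 1))

abbrev rk (k : ℕ) : Bk k := AdjoinRoot.root _

lemma root_pow (k : ℕ) : (rk k) ^ (2 * (k - 2) + 1) = 0 := by
  rw [rk, ← AdjoinRoot.mk_X, ← map_pow, AdjoinRoot.mk_self]

def v (k : ℕ) : Fin 3 → Bk k :=
  ![-(rk k ^ 2), -(algebraMap ℂ (Bk k) ((k : ℂ) - 1) * (-(rk k ^ 2)) ^ (k - 2)), rk k]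

def φ (k : ℕ) : MvPolynomial (Fin 3) ℂ →ₐ[ℂ] Bk k := aeval (v k)

lemma φ_vanish (k : ℕ) : ∀ a ∈ Ik k, φ k a = 0 := by
  have hsub : Ik k ≤ RingHom.ker (φ k) := by
    rw [Ideal.span_le]
    intro p hp
    simp only [Set.mem_insert_iff, Set.mem_singleton_iff] at hp
    have hroot : (rk k) ^ (2 * (k - 2) + 1) = 0 := root_pow k
    rcases hp with h | h | h <;> subst h <;>
      simp only [SetLike.mem_coe, RingHom.mem_ker, φ, map_add, map_mul, map_pow, aeval_C,
        aeval_X, map_ofNat, v, Matrix.cons_val_zero, Matrix.cons_val_one, Matrix.head_cons,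
        Matrix.cons_val_two, Matrix.tail_cons]
    · ring
    · ring
    · have hr0 : (-(rk k ^ 2)) ^ (k - 2) * rk k = 0 := by
        rw [neg_pow, ← pow_mul, mul_assoc, ← pow_succ, hroot, mul_zero]
      have h2 : (2 : Bk k) * -(algebraMap ℂ (Bk k) ((k : ℂ) - 1) * (-(rk k ^ 2)) ^ (k - 2)) * rk k
          = (-2 * algebraMap ℂ (Bk k) ((k : ℂ) - 1)) * ((-(rk k ^ 2)) ^ (k - 2) * rk k) := by
        ring
      rw [h2, hr0, mul_zero]
  intro a ha
  exact hsub ha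

def φbar (k : ℕ) : (MvPolynomial (Fin 3) ℂ ⧸ Ik k) →ₐ[ℂ] Bk k :=
  Ideal.Quotient.liftₐ (Ik k) (φ k) (φ_vanish k)

lemma φbar_mk (k : ℕ) (p : MvPolynomial (Fin 3) ℂ) :
    φbar k (Ideal.Quotient.mk (Ik k) p) = φ k p := by
  rw [φbar, Ideal.Quotient.liftₐ_apply]
  rfl

lemma haX (k : ℕ) (hk : 4 ≤ k) :
    Polynomial.aeval (Ideal.Quotient.mk (Ik k) (X 2))
      ((Polynomial.X : Polynomial ℂ) ^ (2 * (k - 2) + 1)) = 0 := by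
  rw [map_pow, Polynomial.aeval_X, ← map_pow, Ideal.Quotient.eq_zero_iff_mem]
  exact hXn k hk

def ψbar (k : ℕ) (hk : 4 ≤ k) : Bk k →ₐ[ℂ] (MvPolynomial (Fin 3) ℂ ⧸ Ik k) :=
  AdjoinRoot.liftAlgHom _ (Algebra.ofId ℂ _) _ (haX k hk)

lemma ψbar_root (k : ℕ) (hk : 4 ≤ k) :
    ψbar k hk (rk k) = Ideal.Quotient.mk (Ik k) (X 2) :=
  AdjoinRoot.liftAlgHom_root (h := haX k hk) ..

lemma φ_X0 (k : ℕ) : φ k (X 0) = -(rk k ^ 2) := by simp [φ, v]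

lemma φ_X1 (k : ℕ) :
    φ k (X 1) = -(algebraMap ℂ (Bk k) ((k : ℂ) - 1) * (-(rk k ^ 2)) ^ (k - 2)) := by
  simp [φ, v]

lemma φ_X2 (k : ℕ) : φ k (X 2) = rk k := by simp [φ, v]

lemma key0 (k : ℕ) (hk : 4 ≤ k) :
    ψbar k hk (φ k (X 0)) = Ideal.Quotient.mk (Ik k) (X 0) := by
  rw [φ_X0, map_neg, map_pow, ψbar_root, ← map_pow, ← map_neg]
  rw [Ideal.Quotient.mk_eq_mk_iff_sub_mem]
  have h : (-(X 2 ^ 2) - X 0 : MvPolynomial (Fin 3) ℂ) = -(X 0 + X 2 ^ 2) := by ring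
  rw [h]
  exact neg_mem (hg2 k)

lemma key1 (k : ℕ) (hk : 4 ≤ k) :
    ψbar k hk (φ k (X 1)) = Ideal.Quotient.mk (Ik k) (X 1) := by
  rw [φ_X1, map_neg, map_mul, map_pow, map_neg, map_pow, AlgHom.commutes, ψbar_root]
  have halg : algebraMap ℂ (MvPolynomial (Fin 3) ℂ ⧸ Ik k) ((k : ℂ) - 1)
      = Ideal.Quotient.mk (Ik k) (C ((k : ℂ) - 1)) := rfl
  rw [halg]
  have hmem := Ideal.Quotient.eq_zero_iff_mem.mpr (hM2 k)
  simp only [map_add, map_mul, map_pow, map_neg] at hmem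
  linear_combination -hmem

lemma key2 (k : ℕ) (hk : 4 ≤ k) :
    ψbar k hk (φ k (X 2)) = Ideal.Quotient.mk (Ik k) (X 2) := by
  rw [φ_X2, ψbar_root]

lemma compBk (k : ℕ) (hk : 4 ≤ k) :
    (φbar k).comp (ψbar k hk) = AlgHom.id ℂ (Bk k) := by
  apply AdjoinRoot.algHom_ext
  rw [AlgHom.comp_apply, ψbar_root, AlgHom.id_apply]
  show φbar k (Ideal.Quotient.mk (Ik k) (X 2)) = rk k
  rw [φbar_mk]
  simp [φ, v]

lemma compA (k : ℕ) (hk : 4 ≤ k) :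
    (ψbar k hk).comp (φbar k) = AlgHom.id ℂ (MvPolynomial (Fin 3) ℂ ⧸ Ik k) := by
  apply Ideal.Quotient.algHom_ext
  apply MvPolynomial.algHom_ext
  intro i
  have hmk : ∀ p, (Ideal.Quotient.mkₐ ℂ (Ik k)) p = Ideal.Quotient.mk (Ik k) p := fun _ => rfl
  simp only [AlgHom.comp_apply, hmk, φbar_mk, AlgHom.id_apply]
  fin_cases i
  · exact key0 k hk
  · exact key1 k hk
  · exact key2 k hk

def ε (k : ℕ) (hk : 4 ≤ k) : Bk k ≃ₐ[ℂ] (MvPolynomial (Fin 3) ℂ ⧸ Ik k) :=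
  AlgEquiv.ofAlgHom (ψbar k hk) (φbar k) (compA k hk) (compBk k hk)

lemma ε_apply (k : ℕ) (hk : 4 ≤ k) (x : Bk k) : ε k hk x = ψbar k hk x := rfl

def pb (k : ℕ) : PowerBasis ℂ (Bk k) :=
  AdjoinRoot.powerBasis' (Polynomial.monic_X_pow _)

lemma pb_dim (k : ℕ) : (pb k).dim = 2 * (k - 2) + 1 := by
  rw [pb, AdjoinRoot.powerBasis'_dim, Polynomial.natDegree_X_pow]

def bA (k : ℕ) (hk : 4 ≤ k) :
    Module.Basis (Fin (2 * (k - 2) + 1)) ℂ (MvPolynomial (Fin 3) ℂ ⧸ Ik k) :=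
  ((pb k).basis.map (ε k hk).toLinearEquiv).reindex (finCongr (pb_dim k))

lemma bA_apply (k : ℕ) (hk : 4 ≤ k) (j : Fin (2 * (k - 2) + 1)) :
    bA k hk j = (Ideal.Quotient.mk (Ik k) (X 2)) ^ (j : ℕ) := by
  rw [bA, Module.Basis.reindex_apply, Module.Basis.map_apply, PowerBasis.basis_eq_pow]
  rw [AlgEquiv.toLinearEquiv_apply, map_pow]
  have hgen : (ε k hk) (pb k).gen = Ideal.Quotient.mk (Ik k) (X 2) := by
    rw [pb, AdjoinRoot.powerBasis'_gen, ε_apply, ψbar_root]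
  rw [hgen]
  simp

end Stmt18Aux


set_option maxHeartbeats 1000000 in
/-- For `k ≥ 4` and `f̄ = y_1^{k-1} + y_1 y_2 + y_2 y_3^2`, the Jacobian algebra
`ℂ[y_1,y_2,y_3]/((k-1)y_1^{k-2} + y_2, y_1 + y_3^2, 2 y_2 y_3)` has dimension `2k - 3`
and is the algebra generated by elements `a, e` with relations `e² = -a`,
`a^{k-2} e = 0`, with basis `1, a, …, a^{k-2}, e, a e, …, a^{k-3} e`. -/
theorem stmt_18 (k : ℕ) (hk : 4 ≤ k) :
    let A := MvPolynomial (Fin 3) ℂ ⧸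
      Ideal.span ({C ((k : ℂ) - 1) * X 0 ^ (k - 2) + X 1, X 0 + X 2 ^ 2, 2 * X 1 * X 2} :
        Set (MvPolynomial (Fin 3) ℂ))
    Module.finrank ℂ A = 2 * k - 3 ∧
    ∃ a e : A, e ^ 2 = -a ∧ a ^ (k - 2) * e = 0 ∧
      ∃ B : Module.Basis (Fin (k - 1) ⊕ Fin (k - 2)) ℂ A,
        (∀ i : Fin (k - 1), B (Sum.inl i) = a ^ (i : ℕ)) ∧
        (∀ i : Fin (k - 2), B (Sum.inr i) = a ^ (i : ℕ) * e) := by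
  intro A
  let t : A := Ideal.Quotient.mk (Stmt18Aux.Ik k) (X 2)
  have ht : t ^ (2 * (k - 2) + 1) = 0 := by
    show (Ideal.Quotient.mk (Stmt18Aux.Ik k) (X 2) : MvPolynomial (Fin 3) ℂ ⧸ Stmt18Aux.Ik k) ^ (2 * (k - 2) + 1) = 0
    rw [← map_pow, Ideal.Quotient.eq_zero_iff_mem]
    exact Stmt18Aux.hXn k hk
  let idxf : Fin (k - 1) ⊕ Fin (k - 2) → Fin (2 * (k - 2) + 1) := fun s =>
    Sum.rec (fun i => ⟨2 * i.1, by have := i.2; omega⟩)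
            (fun i => ⟨2 * i.1 + 1, by have := i.2; omega⟩) s
  have hinj : Function.Injective idxf := by
    intro x y h
    rcases x with i | i <;> rcases y with j | j <;>
      simp only [idxf, Fin.mk.injEq] at h
    · exact congrArg Sum.inl (Fin.ext (by omega))
    · exact absurd h (by omega)
    · exact absurd h (by omega)
    · exact congrArg Sum.inr (Fin.ext (by omega))
  have hbij : Function.Bijective idxf :=
    (Fintype.bijective_iff_injective_and_card idxf).mpr
      ⟨hinj, by simp only [Fintype.card_sum, Fintype.card_fin]; omega⟩
  let idx := Equiv.ofBijective idxf hbij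
  let w : Fin (k - 1) ⊕ Fin (k - 2) → ℂˣ := fun s =>
    Sum.rec (fun i => (-1 : ℂˣ) ^ i.1) (fun i => (-1 : ℂˣ) ^ i.1) s
  let b0 : Module.Basis (Fin (2 * (k - 2) + 1)) ℂ A := Stmt18Aux.bA k hk
  let Bfin : Module.Basis (Fin (k - 1) ⊕ Fin (k - 2)) ℂ A := (b0.reindex idx.symm).unitsSMul w
  have hb0 : ∀ j, b0 j = t ^ (j : ℕ) := fun j => Stmt18Aux.bA_apply k hk j
  have hBfin : ∀ s, Bfin s = w s • b0 (idx s) := by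
    intro s
    show ((b0.reindex idx.symm).unitsSMul w) s = _
    rw [Module.Basis.unitsSMul_apply, Module.Basis.reindex_apply, Equiv.symm_symm]
  have hsmul : ∀ (m : ℕ) (x : A), ((-1 : ℂˣ) ^ m) • x = (-1 : A) ^ m * x := by
    intro m x
    rw [Units.smul_def ((-1 : ℂˣ) ^ m) x, Units.val_pow_eq_pow_val, Units.val_neg,
      Units.val_one, Algebra.smul_def ((-1 : ℂ) ^ m) x, map_pow, map_neg, map_one]
  refine ⟨?_, -(t ^ 2), t, (neg_neg _).symm, ?_, Bfin, ?_, ?_⟩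
  · rw [Module.finrank_eq_card_basis Bfin]
    simp only [Fintype.card_sum, Fintype.card_fin]
    omega
  · rw [neg_pow, ← pow_mul, mul_assoc, ← pow_succ, ht, mul_zero]
  · intro i
    have hrhs : (-(t ^ 2) : A) ^ (i : ℕ) = (-1 : A) ^ (i : ℕ) * t ^ (2 * (i : ℕ)) := by
      rw [neg_pow (t ^ 2) (i : ℕ), ← pow_mul t 2 (i : ℕ)]
    rw [hBfin, hb0, show ((idx (Sum.inl i)) : ℕ) = 2 * (i : ℕ) from rfl,
      show w (Sum.inl i) = (-1 : ℂˣ) ^ (i : ℕ) from rfl, hsmul, hrhs]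
  · intro i
    have hrhs : (-(t ^ 2) : A) ^ (i : ℕ) * t = (-1 : A) ^ (i : ℕ) * t ^ (2 * (i : ℕ) + 1) := by
      rw [neg_pow (t ^ 2) (i : ℕ), ← pow_mul t 2 (i : ℕ), mul_assoc, ← pow_succ t]
    rw [hBfin, hb0, show ((idx (Sum.inr i)) : ℕ) = 2 * (i : ℕ) + 1 from rfl,
      show w (Sum.inr i) = (-1 : ℂˣ) ^ (i : ℕ) from rfl, hsmul, hrhs]
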